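/- Fix a charge (s_0,s_1)∈ℤ² with s_0 ≤ s_1. For every n≥0, the set Φ_{∞,n}^{(s_0,s_1)} labeling the crystal of the irreducible highest weight U_v(sl_∞)-module of highest weight Λ_{s_0}+Λ_{s_1} is given explicitly by Φ_{∞,n}^{(s_0,s_1)} = { λ=(λ^(0),λ^(1)) ∈ Π_{2,n} : λ^(0)_i ≥ λ^(1)_{i+s_1−s_0} for all i = 1,2,3,… } (parts beyond the length of a partition are 0). -/

import Mathlib

open Finset

/-- A node `(a, b, c)`: row index `a ≥ 1`, column index `b ≥ 1`, component `c ∈ {0,1}`. -/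
abbrev Node : Type := ℕ × ℕ × Fin 2

namespace UglovPaper

/-- Row index of a node. -/
def nrow (γ : Node) : ℕ := γ.1

/-- Column index of a node. -/
def ncol (γ : Node) : ℕ := γ.2.1

/-- Component of a node. -/
def ncomp (γ : Node) : Fin 2 := γ.2.2

/-- A finite set of nodes is the Young diagram of a bipartition iff all indices are `≥ 1`
and the set is closed under moving left in a row and up in a column (in each component). -/
def IsDiagram (D : Finset Node) : Prop :=
  (∀ γ ∈ D, 1 ≤ nrow γ ∧ 1 ≤ ncol γ) ∧
  (∀ γ ∈ D, ∀ b' : ℕ, 1 ≤ b' → b' ≤ ncol γ → (nrow γ, b', ncomp γ) ∈ D) ∧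
  (∀ γ ∈ D, 2 ≤ nrow γ → (nrow γ - 1, ncol γ, ncomp γ) ∈ D)

/-- `part D c a` is the `a`-th part `λ^(c)_a` of the bipartition with diagram `D`. -/
def part (D : Finset Node) (c : Fin 2) (a : ℕ) : ℕ :=
  (D.filter (fun γ => nrow γ = a ∧ ncomp γ = c)).card

/-- The content `b - a + s_c` of a node `(a,b,c)` for the charge `s`. -/
def cont (s : Fin 2 → ℤ) (γ : Node) : ℤ := (ncol γ : ℤ) - (nrow γ : ℤ) + s (ncomp γ)

/-- The residue mod `e` of a node for the charge `s`. -/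
def res (e : ℕ) (s : Fin 2 → ℤ) (γ : Node) : ZMod e := ((cont s γ : ℤ) : ZMod e)

/-- The order `γ <_{(s₀,s₁)} γ'` on nodes. -/
def chargeLT (s : Fin 2 → ℤ) (γ γ' : Node) : Prop :=
  cont s γ < cont s γ' ∨ (cont s γ = cont s γ' ∧ ncomp γ' < ncomp γ)

/-- The positive asymptotic order `γ <_{(v₀,v₁)₊} γ'`. -/
def posLT (γ γ' : Node) : Prop :=
  ncomp γ' < ncomp γ ∨ (ncomp γ = ncomp γ' ∧ nrow γ' < nrow γ)

/-- The negative asymptotic order `γ <_{(v₀,v₁)₋} γ'`. -/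
def negLT (γ γ' : Node) : Prop :=
  ncomp γ < ncomp γ' ∨ (ncomp γ = ncomp γ' ∧ nrow γ' < nrow γ)

/-- `γ` is a removable node of the diagram `D`. -/
def Removable (D : Finset Node) (γ : Node) : Prop := γ ∈ D ∧ IsDiagram (D.erase γ)

/-- `γ` is an addable node of the diagram `D`. -/
def Addable (D : Finset Node) (γ : Node) : Prop := γ ∉ D ∧ IsDiagram (insert γ D)

/-- `γ` is a normal `i`-node of `D` with respect to the order `lt` and the residue map `r`:
it is a removable `i`-node, and for every `i`-node `η` above it, the number of addable
`i`-nodes in the interval `(γ, η]` does not exceed the number of removable `i`-nodes there.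
This is equivalent to surviving the `RA`-deletion process. -/
def NormalNode {α : Type*} (D : Finset Node) (lt : Node → Node → Prop)
    (r : Node → α) (i : α) (γ : Node) : Prop :=
  Removable D γ ∧ r γ = i ∧
  ∀ η : Node, r η = i → lt γ η →
    {x : Node | Addable D x ∧ r x = i ∧ lt γ x ∧ (lt x η ∨ x = η)}.ncard ≤
    {x : Node | Removable D x ∧ r x = i ∧ lt γ x ∧ (lt x η ∨ x = η)}.ncard

/-- `γ` is the good `i`-node of `D`: the minimal normal `i`-node for the order `lt`. -/
def GoodNode {α : Type*} (D : Finset Node) (lt : Node → Node → Prop)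
    (r : Node → α) (i : α) (γ : Node) : Prop :=
  NormalNode D lt r i γ ∧ ∀ δ : Node, NormalNode D lt r i δ → δ = γ ∨ lt γ δ

/-- The recursively defined class of bipartitions labelling the crystal:
the empty bipartition has rank `0`, and a bipartition of rank `n + 1` belongs iff
removing some good `i`-node yields a member of rank `n`. -/
inductive CrystalSet {α : Type*} (lt : Node → Node → Prop) (r : Node → α) :
    ℕ → Finset Node → Prop
  | empty : CrystalSet lt r 0 ∅
  | step {n : ℕ} {D : Finset Node} {γ : Node} (i : α) :
      IsDiagram D → GoodNode D lt r i γ →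
      CrystalSet lt r n (D.erase γ) → CrystalSet lt r (n + 1) D

/-- The set `Φ_{e,n}^{(s₀,s₁)}` of Uglov bipartitions. -/
def UglovSet (e : ℕ) (s : Fin 2 → ℤ) : ℕ → Finset Node → Prop :=
  CrystalSet (chargeLT s) (res e s)

/-- The set `Φ_{e,n}^{(v₀,v₁)₊}` of positive Kleshchev bipartitions. -/
def KleshchevPos (e : ℕ) (v : Fin 2 → ℤ) : ℕ → Finset Node → Prop :=
  CrystalSet posLT (res e v)

/-- The set `Φ_{e,n}^{(v₀,v₁)₋}` of negative Kleshchev bipartitions. -/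
def KleshchevNeg (e : ℕ) (v : Fin 2 → ℤ) : ℕ → Finset Node → Prop :=
  CrystalSet negLT (res e v)

/-- Swapping the two components of a bipartition: `(λ⁽⁰⁾,λ⁽¹⁾) ↦ (λ⁽¹⁾,λ⁽⁰⁾)`. -/
def swapDiagram (D : Finset Node) : Finset Node :=
  D.image (fun γ => (γ.1, γ.2.1, γ.2.2 + 1))

/-! ### Symbols -/

/-- `beta s m D c j` is the `j`-th entry `β^(c)_j = λ^(c)_j − j + s_c + m` of the
`s`-symbol of `D`, for `1 ≤ j ≤ m + s_c`. -/
def beta (s : Fin 2 → ℕ) (m : ℕ) (D : Finset Node) (c : Fin 2) (j : ℕ) : ℕ :=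
  part D c j + (m + s c) - j

/-- The multiset of entries of the row `β^(c)` of the `s`-symbol. -/
def rowM (s : Fin 2 → ℕ) (m : ℕ) (D : Finset Node) (c : Fin 2) : Multiset ℕ :=
  (Finset.Icc 1 (m + s c)).val.map (beta s m D c)

/-- The list of the values `θ(β⁽⁰⁾_{m+s₀}), θ(β⁽⁰⁾_{m+s₀-1}), …` chosen greedily:
at step `k` (handling `p = m + s₀ - k`) we choose the largest entry of the top row not yet
used that is `≤ β⁽⁰⁾_p`. -/
def thetaList (s : Fin 2 → ℕ) (m : ℕ) (D : Finset Node) : ℕ → List ℕ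
  | 0 => []
  | k + 1 =>
      let prev := thetaList s m D k
      prev ++ [WithBot.unbotD 0 ((((Finset.Icc 1 (m + s 1)).image (beta s m D 1)).filter
          (fun y => y ∉ prev ∧ y ≤ beta s m D 0 (m + s 0 - k))).max)]

/-- The greedy injection `θ`, as a function of the index `p ∈ {1, …, m + s₀}`:
`theta s m D p = θ(β⁽⁰⁾_p)`. -/
def theta (s : Fin 2 → ℕ) (m : ℕ) (D : Finset Node) (p : ℕ) : ℕ :=
  (thetaList s m D (m + s 0)).getD (m + s 0 - p) 0

/-- The bottom row of the symbol obtained by exchanging the entries of every pair: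
it is the multiset of the values `θ(β⁽⁰⁾_p)`. -/
def bottomRowNew (s : Fin 2 → ℕ) (m : ℕ) (D : Finset Node) : Multiset ℕ :=
  (Finset.Icc 1 (m + s 0)).val.map (theta s m D)

/-- The top row of the symbol obtained by exchanging the entries of every pair:
all entries of both rows that did not go to the new bottom row. -/
def topRowNew (s : Fin 2 → ℕ) (m : ℕ) (D : Finset Node) : Multiset ℕ :=
  (rowM s m D 0 + rowM s m D 1) - bottomRowNew s m D

/-- The rows of the symbol of `Υ(λ)`. -/
def newRow (s : Fin 2 → ℕ) (m : ℕ) (D : Finset Node) (c : Fin 2) : Multiset ℕ :=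
  if c = 0 then bottomRowNew s m D else topRowNew s m D

/-- The `j`-th largest entry of a multiset of naturals (`j ≥ 1`). -/
def rowEntry (B : Multiset ℕ) (j : ℕ) : ℕ :=
  (B.sort (· ≤ ·)).getD (Multiset.card B - j) 0

/-- The `j`-th part of the partition encoded by a multiset of `card B` distinct
beta-numbers: `λ_j = (j-th largest entry) + j - card B`. -/
def rowPart (B : Multiset ℕ) (j : ℕ) : ℕ :=
  if 1 ≤ j ∧ j ≤ Multiset.card B then rowEntry B j + j - Multiset.card B else 0

/-- The Young diagram of the bipartition with parts `p`, within the box of size `N`. -/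
def toDiagram (p : Fin 2 → ℕ → ℕ) (N : ℕ) : Finset Node :=
  ((Finset.Icc 1 N) ×ˢ (Finset.Icc 1 N) ×ˢ (Finset.univ : Finset (Fin 2))).filter
    (fun γ => γ.2.1 ≤ p γ.2.2 γ.1)

/-- The map `Υ_{(s₀,s₁)}`: exchange the two entries of every pair of the `s`-symbol and
reorder the rows; `Upsilon s m D` is the diagram of the resulting bipartition. -/
def Upsilon (s : Fin 2 → ℕ) (m : ℕ) (D : Finset Node) : Finset Node :=
  toDiagram (fun c j => rowPart (newRow s m D c) j) D.card

/-- The list of values `τ(α⁽⁰⁾_1), τ(α⁽⁰⁾_2), …` chosen greedily: at step `k + 1`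
(handling `p = k + 1`) we choose the smallest entry of the top row `Top` not yet used
that is `≥ b (k+1)`, where `b p` is the `p`-th entry of the bottom row. -/
def tauList (Top : Finset ℕ) (b : ℕ → ℕ) : ℕ → List ℕ
  | 0 => []
  | k + 1 =>
      let prev := tauList Top b k
      prev ++ [WithTop.untopD 0 ((Top.filter (fun y => y ∉ prev ∧ b (k + 1) ≤ y)).min)]

/-- The greedy injection `τ`, as a function of the index `p ∈ {1, …, P}`. -/
def tau (Top : Finset ℕ) (b : ℕ → ℕ) (P : ℕ) (p : ℕ) : ℕ :=
  (tauList Top b P).getD (p - 1) 0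

end UglovPaper
namespace UglovPaper


lemma downward_eq_Icc (S : Finset ℕ) (h1 : ∀ b ∈ S, 1 ≤ b)
    (h2 : ∀ b ∈ S, ∀ b', 1 ≤ b' → b' ≤ b → b' ∈ S) : S = Finset.Icc 1 S.card := by
  rcases S.eq_empty_or_nonempty with rfl | hne
  · simp
  · have hmax := S.max'_mem hne
    have hS : S = Finset.Icc 1 (S.max' hne) := by
      apply Finset.Subset.antisymm
      · intro b hb
        exact Finset.mem_Icc.2 ⟨h1 b hb, S.le_max' b hb⟩
      · intro b hb
        rcases Finset.mem_Icc.1 hb with ⟨hb1, hb2⟩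
        exact h2 _ hmax b hb1 hb2
    have hcard : S.card = S.max' hne := by
      have := congrArg Finset.card hS
      rw [this, Nat.card_Icc]; omega
    rw [hcard, ← hS]

lemma mem_diagram_iff {D : Finset Node} (hD : IsDiagram D) {a b : ℕ} {c : Fin 2} :
    (a, b, c) ∈ D ↔ 1 ≤ a ∧ 1 ≤ b ∧ b ≤ part D c a := by
  obtain ⟨hpos, hrow, hcol⟩ := hD
  set F := D.filter (fun γ => nrow γ = a ∧ ncomp γ = c) with hF
  have hmemF : ∀ γ ∈ F, γ = (a, ncol γ, c) := by
    intro γ hγ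
    rcases Finset.mem_filter.1 hγ with ⟨_, h1, h2⟩
    obtain ⟨x, y, z⟩ := γ
    simp only [nrow, ncomp, ncol] at h1 h2 ⊢
    rw [h1, h2]
  have hcardim : (F.image ncol).card = F.card := by
    apply Finset.card_image_of_injOn
    intro x hx y hy hxy
    rw [hmemF x hx, hmemF y hy, hxy]
  set S := F.image ncol with hSdef
  have hpart : part D c a = S.card := by
    rw [hSdef, hcardim]; rfl
  have hSIcc : S = Finset.Icc 1 (part D c a) := by
    rw [hpart]
    apply downward_eq_Icc
    · intro b hb
      rcases Finset.mem_image.1 hb with ⟨γ, hγ, rfl⟩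
      exact (hpos γ (Finset.mem_filter.1 hγ).1).2
    · intro b hb b' hb1 hb2
      rcases Finset.mem_image.1 hb with ⟨γ, hγ, rfl⟩
      have hγD := (Finset.mem_filter.1 hγ).1
      have h2 := hrow γ hγD b' hb1 hb2
      rcases Finset.mem_filter.1 hγ with ⟨_, he1, he2⟩
      apply Finset.mem_image.2
      refine ⟨(nrow γ, b', ncomp γ), ?_, rfl⟩
      apply Finset.mem_filter.2
      exact ⟨h2, he1, he2⟩
  constructor
  · intro h
    refine ⟨(hpos _ h).1, (hpos _ h).2, ?_⟩
    have hbS : b ∈ S := Finset.mem_image.2 ⟨(a,b,c), Finset.mem_filter.2 ⟨h, rfl, rfl⟩, rfl⟩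
    rw [hSIcc] at hbS
    exact (Finset.mem_Icc.1 hbS).2
  · rintro ⟨ha, hb, hbp⟩
    have hbS : b ∈ S := by rw [hSIcc]; exact Finset.mem_Icc.2 ⟨hb, hbp⟩
    rcases Finset.mem_image.1 hbS with ⟨γ, hγ, rfl⟩
    have := hmemF γ hγ
    rw [← this]
    exact (Finset.mem_filter.1 hγ).1

lemma part_zero_row {D : Finset Node} (hD : IsDiagram D) (c : Fin 2) : part D c 0 = 0 := by
  rw [part, Finset.card_eq_zero, Finset.filter_eq_empty_iff]
  rintro γ hγ ⟨h1, _⟩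
  have := (hD.1 γ hγ).1
  omega

lemma part_antitone {D : Finset Node} (hD : IsDiagram D) (c : Fin 2) {a : ℕ} (_ : 1 ≤ a) :
    part D c (a + 1) ≤ part D c a := by
  by_contra h
  push_neg at h
  have h1 : 1 ≤ part D c (a+1) := by omega
  have hm : (a + 1, part D c (a+1), c) ∈ D :=
    (mem_diagram_iff hD).2 ⟨by omega, h1, le_refl _⟩
  have := hD.2.2 _ hm (by simp [nrow]; omega)
  simp only [nrow, ncol, ncomp, Nat.add_sub_cancel] at this
  have := ((mem_diagram_iff hD).1 this).2.2
  omega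

lemma part_le_of_le {D : Finset Node} (hD : IsDiagram D) (c : Fin 2) {a a' : ℕ}
    (ha : 1 ≤ a) (haa : a ≤ a') : part D c a' ≤ part D c a := by
  obtain ⟨k, rfl⟩ := Nat.exists_eq_add_of_le haa
  induction k with
  | zero => simp
  | succ m ih =>
    have h1 := part_antitone hD c (a := a + m) (by omega)
    have h2 := ih (by omega)
    calc part D c (a + (m+1)) = part D c ((a+m)+1) := by ring_nf
    _ ≤ part D c (a + m) := h1
    _ ≤ part D c a := h2

/-- Bridging: the diagonal value strictly decreases along rows. -/
lemma part_delta {D : Finset Node} (hD : IsDiagram D) (c : Fin 2) {a a' : ℕ}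
    (ha : 1 ≤ a) (haa : a ≤ a') :
    (part D c a' : ℤ) - a' ≤ (part D c a : ℤ) - a - ((a' : ℤ) - a) := by
  have := part_le_of_le hD c ha haa
  omega


lemma removable_iff {D : Finset Node} (hD : IsDiagram D) {a b : ℕ} {c : Fin 2} :
    Removable D (a, b, c) ↔
      1 ≤ a ∧ 1 ≤ b ∧ b = part D c a ∧ part D c (a + 1) < part D c a := by
  constructor
  · rintro ⟨hmem, hE⟩
    obtain ⟨ha, hb, hbp⟩ := (mem_diagram_iff hD).1 hmem
    refine ⟨ha, hb, ?_, ?_⟩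
    · by_contra hne
      have hlt : b < part D c a := lt_of_le_of_ne hbp hne
      have hm : (a, part D c a, c) ∈ D :=
        (mem_diagram_iff hD).2 ⟨ha, by omega, le_refl _⟩
      have hm' : (a, part D c a, c) ∈ D.erase (a, b, c) := by
        apply Finset.mem_erase.2
        refine ⟨?_, hm⟩
        intro h
        have : part D c a = b := congrArg (fun γ : Node => ncol γ) h
        omega
      have := hE.2.1 _ hm' b hb (by simpa [ncol] using le_of_lt hlt)
      simp only [nrow, ncomp] at this
      exact absurd this (by simp)
    · by_contra hge
      push_neg at hge
      have hbpa : b = part D c a := by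
        by_contra hne
        have hlt : b < part D c a := lt_of_le_of_ne hbp hne
        have hm : (a, part D c a, c) ∈ D :=
          (mem_diagram_iff hD).2 ⟨ha, by omega, le_refl _⟩
        have hm' : (a, part D c a, c) ∈ D.erase (a, b, c) := by
          apply Finset.mem_erase.2
          refine ⟨?_, hm⟩
          intro h
          have : part D c a = b := congrArg (fun γ : Node => ncol γ) h
          omega
        have := hE.2.1 _ hm' b hb (by simpa [ncol] using le_of_lt hlt)
        simp only [nrow, ncomp] at this
        exact absurd this (by simp)
      have hm : (a + 1, b, c) ∈ D := by
        apply (mem_diagram_iff hD).2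
        exact ⟨by omega, hb, by omega⟩
      have hm' : (a + 1, b, c) ∈ D.erase (a, b, c) := by
        apply Finset.mem_erase.2
        refine ⟨?_, hm⟩
        intro h
        have : a + 1 = a := congrArg (fun γ : Node => nrow γ) h
        omega
      have := hE.2.2 _ hm' (by simp only [nrow]; omega)
      simp only [nrow, ncol, ncomp, Nat.add_sub_cancel] at this
      exact absurd this (by simp)
  · rintro ⟨ha, hb, hbp, hstep⟩
    have hmem : (a, b, c) ∈ D := (mem_diagram_iff hD).2 ⟨ha, hb, le_of_eq hbp⟩
    refine ⟨hmem, ?_, ?_, ?_⟩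
    · intro γ hγ
      exact hD.1 γ (Finset.mem_of_mem_erase hγ)
    · intro γ hγ b' hb1 hb2
      have hγD := Finset.mem_of_mem_erase hγ
      have hmem' := hD.2.1 γ hγD b' hb1 hb2
      apply Finset.mem_erase.2
      refine ⟨?_, hmem'⟩
      intro h
      -- (nrow γ, b', ncomp γ) = (a, b, c): so nrow γ = a, b' = b, ncomp γ = c
      have h1 : nrow γ = a := congrArg (fun δ : Node => nrow δ) h
      have h2 : b' = b := congrArg (fun δ : Node => ncol δ) h
      have h3 : ncomp γ = c := congrArg (fun δ : Node => ncomp δ) h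
      -- γ ∈ D with row a comp c, so ncol γ ≤ part D c a = b; but b = b' ≤ ncol γ and γ ≠ (a,b,c)
      have hγm : γ = (a, ncol γ, c) := by
        obtain ⟨x, y, z⟩ := γ
        simp only [nrow, ncomp, ncol] at h1 h3 ⊢
        rw [h1, h3]
      have hcol : ncol γ ≤ part D c a := by
        have := (mem_diagram_iff hD).1 (hγm ▸ hγD)
        exact this.2.2
      have hge : b ≤ ncol γ := by omega
      have hco : ncol γ = b := by omega
      have : γ = (a, b, c) := by rw [hγm, hco]
      exact (Finset.mem_erase.1 hγ).1 this
    · intro γ hγ h2r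
      have hγD := Finset.mem_of_mem_erase hγ
      have hmem' := hD.2.2 γ hγD h2r
      apply Finset.mem_erase.2
      refine ⟨?_, hmem'⟩
      intro h
      have h1 : nrow γ - 1 = a := congrArg (fun δ : Node => nrow δ) h
      have h2 : ncol γ = b := congrArg (fun δ : Node => ncol δ) h
      have h3 : ncomp γ = c := congrArg (fun δ : Node => ncomp δ) h
      have hγm : γ = (a + 1, b, c) := by
        obtain ⟨x, y, z⟩ := γ
        simp only [nrow, ncomp, ncol] at h1 h2 h3 h2r ⊢
        simp only [Prod.mk.injEq]
        refine ⟨by omega, h2, h3⟩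
      have hcol : b ≤ part D c (a+1) := ((mem_diagram_iff hD).1 (hγm ▸ hγD)).2.2
      omega


lemma addable_iff {D : Finset Node} (hD : IsDiagram D) {a b : ℕ} {c : Fin 2} :
    Addable D (a, b, c) ↔
      1 ≤ a ∧ b = part D c a + 1 ∧ (a = 1 ∨ part D c a < part D c (a - 1)) := by
  constructor
  · rintro ⟨hnm, hI⟩
    have hmem : (a, b, c) ∈ insert (a, b, c) D := Finset.mem_insert_self _ _
    obtain ⟨ha, hb⟩ := hI.1 _ hmem
    simp only [nrow, ncol] at ha hb
    have hbgt : part D c a < b := by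
      by_contra hle
      push_neg at hle
      exact hnm ((mem_diagram_iff hD).2 ⟨ha, hb, hle⟩)
    have hbeq : b = part D c a + 1 := by
      by_contra hne
      have hgt : part D c a + 1 < b := by omega
      have h1 : (a, part D c a + 1, c) ∈ insert (a, b, c) D := by
        have := hI.2.1 _ hmem (part D c a + 1) (by omega) (by simp [ncol]; omega)
        simpa [nrow, ncomp] using this
      rcases Finset.mem_insert.1 h1 with h | h
      · have : part D c a + 1 = b := congrArg (fun δ : Node => ncol δ) h
        omega
      · have := ((mem_diagram_iff hD).1 h).2.2
        omega
    refine ⟨ha, hbeq, ?_⟩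
    by_cases ha1 : a = 1
    · left; exact ha1
    · right
      have h2a : 2 ≤ a := by omega
      have h1 : (a - 1, b, c) ∈ insert (a, b, c) D := by
        have := hI.2.2 _ hmem (by simpa [nrow] using h2a)
        simpa [nrow, ncol, ncomp] using this
      rcases Finset.mem_insert.1 h1 with h | h
      · have : a - 1 = a := congrArg (fun δ : Node => nrow δ) h
        omega
      · have := ((mem_diagram_iff hD).1 h).2.2
        omega
  · rintro ⟨ha, hb, hcond⟩
    have hnm : (a, b, c) ∉ D := by
      intro h
      have := ((mem_diagram_iff hD).1 h).2.2
      omega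
    refine ⟨hnm, ?_, ?_, ?_⟩
    · rintro γ hγ
      rcases Finset.mem_insert.1 hγ with rfl | h
      · exact ⟨by simpa [nrow] using ha, by simp [ncol]; omega⟩
      · exact hD.1 γ h
    · rintro γ hγ b' hb1 hb2
      rcases Finset.mem_insert.1 hγ with rfl | h
      · simp only [nrow, ncol, ncomp] at hb2 ⊢
        rcases eq_or_lt_of_le hb2 with rfl | hlt
        · exact Finset.mem_insert_self _ _
        · apply Finset.mem_insert_of_mem
          apply (mem_diagram_iff hD).2
          exact ⟨ha, hb1, by omega⟩
      · exact Finset.mem_insert_of_mem (hD.2.1 γ h b' hb1 hb2)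
    · rintro γ hγ h2r
      rcases Finset.mem_insert.1 hγ with rfl | h
      · simp only [nrow, ncol, ncomp] at h2r ⊢
        apply Finset.mem_insert_of_mem
        apply (mem_diagram_iff hD).2
        rcases hcond with h1 | hlt
        · omega
        · refine ⟨by omega, by omega, ?_⟩
          have : part D c (a-1) ≥ part D c a + 1 := by omega
          omega
      · exact Finset.mem_insert_of_mem (hD.2.2 γ h h2r)

lemma part_erase {D : Finset Node} {γ : Node} (hγ : γ ∈ D) (c : Fin 2) (a : ℕ) :
    part (D.erase γ) c a =
      if nrow γ = a ∧ ncomp γ = c then part D c a - 1 else part D c a := by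
  classical
  unfold part
  rw [Finset.filter_erase]
  by_cases h : nrow γ = a ∧ ncomp γ = c
  · rw [if_pos h, Finset.card_erase_of_mem (Finset.mem_filter.2 ⟨hγ, h⟩)]
  · rw [if_neg h, Finset.erase_eq_of_notMem]
    intro hm
    exact h (Finset.mem_filter.1 hm).2


lemma cont_mk (s : Fin 2 → ℤ) (a b : ℕ) (c : Fin 2) :
    cont s (a, b, c) = (b : ℤ) - a + s c := rfl

lemma lt_same_cont {s : Fin 2 → ℤ} {x y : Node} (h : cont s x = cont s y) :
    chargeLT s x y ↔ ncomp y < ncomp x := by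
  simp [chargeLT, h]

lemma row_unique {D : Finset Node} (hD : IsDiagram D) {c : Fin 2} {a a' : ℕ}
    (ha : 1 ≤ a) (ha' : 1 ≤ a') (h : (part D c a : ℤ) - a = (part D c a' : ℤ) - a') :
    a = a' := by
  rcases le_total a a' with hle | hle
  · have := part_delta hD c ha hle
    omega
  · have := part_delta hD c ha' hle
    omega

lemma addable_unique {D : Finset Node} (hD : IsDiagram D) {s : Fin 2 → ℤ} {x y : Node}
    (hx : Addable D x) (hy : Addable D y) (hc : ncomp x = ncomp y)
    (hcont : cont s x = cont s y) : x = y := by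
  obtain ⟨a, b, c⟩ := x
  obtain ⟨a', b', c'⟩ := y
  simp only [ncomp] at hc
  subst hc
  obtain ⟨ha, hb, -⟩ := (addable_iff hD).1 hx
  obtain ⟨ha', hb', -⟩ := (addable_iff hD).1 hy
  simp only [cont_mk] at hcont
  have heq : (part D c a : ℤ) - a = (part D c a' : ℤ) - a' := by omega
  have := row_unique hD ha ha' heq
  subst this
  simp only [Prod.mk.injEq]
  exact ⟨trivial, by omega, trivial⟩

lemma removable_unique {D : Finset Node} (hD : IsDiagram D) {s : Fin 2 → ℤ} {x y : Node}
    (hx : Removable D x) (hy : Removable D y) (hc : ncomp x = ncomp y)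
    (hcont : cont s x = cont s y) : x = y := by
  obtain ⟨a, b, c⟩ := x
  obtain ⟨a', b', c'⟩ := y
  simp only [ncomp] at hc
  subst hc
  obtain ⟨ha, hb, hbe, -⟩ := (removable_iff hD).1 hx
  obtain ⟨ha', hb', hbe', -⟩ := (removable_iff hD).1 hy
  simp only [cont_mk] at hcont
  have heq : (part D c a : ℤ) - a = (part D c a' : ℤ) - a' := by omega
  have := row_unique hD ha ha' heq
  subst this
  simp only [Prod.mk.injEq]
  exact ⟨trivial, by omega, trivial⟩

lemma not_addable_removable {D : Finset Node} (hD : IsDiagram D) {s : Fin 2 → ℤ}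
    {x y : Node} (hx : Addable D x) (hy : Removable D y) (hc : ncomp x = ncomp y)
    (hcont : cont s x = cont s y) : False := by
  obtain ⟨a, b, c⟩ := x
  obtain ⟨a', b', c'⟩ := y
  simp only [ncomp] at hc
  subst hc
  obtain ⟨ha, hb, -⟩ := (addable_iff hD).1 hx
  obtain ⟨ha', hb', hbe', hstep⟩ := (removable_iff hD).1 hy
  simp only [cont_mk] at hcont
  -- (part a + 1) - a = part a' - a'
  have heq : (part D c a : ℤ) + 1 - a = (part D c a' : ℤ) - a' := by omega
  rcases le_total a a' with hle | hle
  · have := part_delta hD c ha hle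
    omega
  · rcases eq_or_lt_of_le hle with rfl | hlt
    · omega
    have h1 : a' + 1 ≤ a := hlt
    have h2 := part_delta hD c (a := a' + 1) (by omega) h1
    have h3 : ((a' + 1 : ℕ) : ℤ) = (a' : ℤ) + 1 := by push_cast; ring
    rw [h3] at h2
    omega


lemma fin2_cases (z : Fin 2) : z = 0 ∨ z = 1 := by fin_cases z <;> simp

lemma comp_lt_one {z : Fin 2} (h : z < 1) : z = 0 := by
  fin_cases z <;> simp_all

lemma good_comp1 {D : Finset Node} (hD : IsDiagram D) {s : Fin 2 → ℤ} {γ : Node}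
    (hrem : Removable D γ) (hc : ncomp γ = 1)
    (hna : ∀ x : Node, Addable D x → ncomp x = 0 → cont s x ≠ cont s γ) :
    GoodNode D (chargeLT s) (cont s) (cont s γ) γ := by
  constructor
  · refine ⟨hrem, rfl, ?_⟩
    intro η hη hlt
    have hempty : {x : Node | Addable D x ∧ cont s x = cont s γ ∧ chargeLT s γ x ∧
        (chargeLT s x η ∨ x = η)} = ∅ := by
      ext x
      simp only [Set.mem_setOf_eq, Set.mem_empty_iff_false, iff_false, not_and]
      intro hax hcx hgx
      exfalso
      have hlt2 := (lt_same_cont hcx.symm).1 hgx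
      rw [hc] at hlt2
      exact hna x hax (comp_lt_one hlt2) hcx
    rw [hempty]
    simp
  · intro δ hδ
    obtain ⟨hδrem, hδcont, -⟩ := hδ
    rcases fin2_cases (ncomp δ) with h0 | h1
    · right
      refine (lt_same_cont hδcont.symm).2 ?_
      rw [hc, h0]
      decide
    · left
      exact removable_unique hD hδrem hrem (by rw [h1, hc]) hδcont

lemma good_comp0 {D : Finset Node} (hD : IsDiagram D) {s : Fin 2 → ℤ} {γ : Node}
    (hrem : Removable D γ) (hc : ncomp γ = 0)
    (hnr : ∀ x : Node, Removable D x → ncomp x = 1 → cont s x ≠ cont s γ) :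
    GoodNode D (chargeLT s) (cont s) (cont s γ) γ := by
  constructor
  · refine ⟨hrem, rfl, ?_⟩
    intro η hη hlt
    have hempty : {x : Node | Addable D x ∧ cont s x = cont s γ ∧ chargeLT s γ x ∧
        (chargeLT s x η ∨ x = η)} = ∅ := by
      ext x
      simp only [Set.mem_setOf_eq, Set.mem_empty_iff_false, iff_false, not_and]
      intro hax hcx hgx
      exfalso
      have hlt2 := (lt_same_cont hcx.symm).1 hgx
      rw [hc] at hlt2
      exact absurd hlt2 (by simp)
    rw [hempty]
    simp
  · intro δ hδ
    obtain ⟨hδrem, hδcont, -⟩ := hδ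
    rcases fin2_cases (ncomp δ) with h0 | h1
    · left
      exact removable_unique hD hδrem hrem (by rw [h0, hc]) hδcont
    · exact absurd hδcont (hnr δ hδrem h1)

lemma bad_not_normal {D : Finset Node} (hD : IsDiagram D) {s : Fin 2 → ℤ} {γ η : Node}
    (hcγ : ncomp γ = 1) (hη : Addable D η) (hcη : ncomp η = 0)
    (he : cont s η = cont s γ) :
    ¬ NormalNode D (chargeLT s) (cont s) (cont s γ) γ := by
  rintro ⟨-, -, hcond⟩
  have hlt : chargeLT s γ η := by
    refine (lt_same_cont he.symm).2 ?_
    rw [hcγ, hcη]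
    decide
  have h := hcond η he hlt
  have hA : {x : Node | Addable D x ∧ cont s x = cont s γ ∧ chargeLT s γ x ∧
      (chargeLT s x η ∨ x = η)} = {η} := by
    ext x
    simp only [Set.mem_setOf_eq, Set.mem_singleton_iff]
    constructor
    · rintro ⟨hax, hcx, hgx, -⟩
      have hlt2 := (lt_same_cont hcx.symm).1 hgx
      rw [hcγ] at hlt2
      exact addable_unique hD hax hη (by rw [comp_lt_one hlt2, hcη]) (hcx.trans he.symm)
    · rintro rfl
      exact ⟨hη, he, hlt, Or.inr rfl⟩
  have hR : {x : Node | Removable D x ∧ cont s x = cont s γ ∧ chargeLT s γ x ∧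
      (chargeLT s x η ∨ x = η)} = ∅ := by
    ext x
    simp only [Set.mem_setOf_eq, Set.mem_empty_iff_false, iff_false, not_and]
    intro hrx hcx hgx
    exfalso
    have hlt2 := (lt_same_cont hcx.symm).1 hgx
    rw [hcγ] at hlt2
    exact not_addable_removable hD hη hrx (by rw [hcη, comp_lt_one hlt2])
      (he.trans hcx.symm)
  rw [hA, hR] at h
  simp at h


lemma forward_dir {s : Fin 2 → ℤ} {d : ℕ} (hd : (d : ℤ) = s 1 - s 0) {n : ℕ}
    {D : Finset Node} (h : CrystalSet (chargeLT s) (cont s) n D) :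
    IsDiagram D ∧ D.card = n ∧
      ∀ i : ℕ, 1 ≤ i → part D 1 (i + d) ≤ part D 0 i := by
  induction h with
  | empty =>
    refine ⟨⟨by simp, by simp, by simp⟩, by simp, ?_⟩
    intro i _
    simp [part]
  | @step n' D' γ i hdiag hgood hprev ih =>
    obtain ⟨hEdiag, hEcard, hEdom⟩ := ih
    have hγnorm := hgood.1
    have hγrem : Removable D' γ := hγnorm.1
    have hγD : γ ∈ D' := hγrem.1
    have hcard : D'.card = n' + 1 := by
      have := Finset.card_erase_of_mem hγD
      have hpos : 1 ≤ D'.card := Finset.card_pos.2 ⟨γ, hγD⟩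
      omega
    refine ⟨hdiag, hcard, ?_⟩
    intro j hj
    by_contra hlt
    push_neg at hlt
    obtain ⟨a₀, b₀, c₀⟩ := γ
    have hpe := part_erase hγD
    rcases fin2_cases c₀ with rfl | rfl
    · -- removed node in component 0: erase can't fix the violation
      have h1 := hEdom j hj
      have e1 : part (D'.erase (a₀, b₀, 0)) 1 (j + d) = part D' 1 (j + d) := by
        rw [hpe]
        simp [ncomp]
      have e0 : part (D'.erase (a₀, b₀, 0)) 0 j ≤ part D' 0 j := by
        rw [hpe]
        split <;> omega
      omega
    · by_cases hrow : a₀ = j + d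
      · subst hrow
        -- exact violation: part D' 1 (j+d) = part D' 0 j + 1
        have h1 := hEdom j hj
        have e1 : part (D'.erase (j + d, b₀, 1)) 1 (j + d) = part D' 1 (j + d) - 1 := by
          rw [hpe]; simp [ncomp, nrow]
        have e0 : part (D'.erase (j + d, b₀, 1)) 0 j = part D' 0 j := by
          rw [hpe]; simp [ncomp]
        have heq : part D' 1 (j + d) = part D' 0 j + 1 := by omega
        obtain ⟨ha₀, hb₀, hbeq, hstep⟩ := (removable_iff hdiag).1 hγrem
        -- the addable node η = (j, part D' 0 j + 1, 0)
        have hη : Addable D' (j, part D' 0 j + 1, 0) := by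
          apply (addable_iff hdiag).2
          refine ⟨hj, rfl, ?_⟩
          by_cases hj1 : j = 1
          · left; exact hj1
          · right
            have hj2 : 2 ≤ j := by omega
            have h2 := hEdom (j - 1) (by omega)
            have e2 : part (D'.erase (j + d, b₀, 1)) 1 (j - 1 + d) = part D' 1 (j - 1 + d) := by
              rw [hpe]
              simp only [ncomp, nrow]
              rw [if_neg]
              rintro ⟨h3, -⟩
              omega
            have e3 : part (D'.erase (j + d, b₀, 1)) 0 (j - 1) = part D' 0 (j - 1) := by
              rw [hpe]; simp [ncomp]
            have hmono : part D' 1 (j + d) ≤ part D' 1 (j - 1 + d) := by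
              apply part_le_of_le hdiag 1 (by omega)
              omega
            omega
        have hcont : cont s (j, part D' 0 j + 1, 0) = cont s (j + d, b₀, 1) := by
          rw [cont_mk, cont_mk]
          have : (b₀ : ℤ) = (part D' 0 j : ℤ) + 1 := by omega
          rw [this]
          push_cast
          omega
        have := bad_not_normal hdiag (γ := (j + d, b₀, 1)) rfl hη rfl hcont
        apply this
        have hi : i = cont s (j + d, b₀, 1) := hγnorm.2.1.symm
        rw [← hi]
        exact hγnorm
      · have h1 := hEdom j hj
        have e1 : part (D'.erase (a₀, b₀, 1)) 1 (j + d) = part D' 1 (j + d) := by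
          rw [hpe]
          simp only [ncomp, nrow]
          rw [if_neg]
          rintro ⟨h3, -⟩
          exact hrow h3
        have e0 : part (D'.erase (a₀, b₀, 1)) 0 j = part D' 0 j := by
          rw [hpe]; simp [ncomp]
        omega


lemma exists_last_row {D : Finset Node} (hD : IsDiagram D) {c : Fin 2}
    (hne : ∃ γ ∈ D, ncomp γ = c) :
    ∃ ℓ : ℕ, 1 ≤ ℓ ∧ 1 ≤ part D c ℓ ∧ part D c (ℓ + 1) = 0 ∧
      ∀ a : ℕ, 1 ≤ part D c a → a ≤ ℓ := by
  classical
  set F := D.filter (fun γ => ncomp γ = c) with hF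
  have hFne : (F.image nrow).Nonempty := by
    obtain ⟨γ, hγ, hγc⟩ := hne
    exact ⟨nrow γ, Finset.mem_image.2 ⟨γ, Finset.mem_filter.2 ⟨hγ, hγc⟩, rfl⟩⟩
  set ℓ := (F.image nrow).max' hFne with hℓ
  have hmem := (F.image nrow).max'_mem hFne
  obtain ⟨γ, hγF, hγr⟩ := Finset.mem_image.1 hmem
  obtain ⟨hγD, hγc⟩ := Finset.mem_filter.1 hγF
  have hkey : ∀ a : ℕ, 1 ≤ part D c a → a ≤ ℓ := by
    intro a hpa
    have hm : (a, 1, c) ∈ D := by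
      apply (mem_diagram_iff hD).2
      refine ⟨?_, le_refl 1, hpa⟩
      by_contra h0
      have : a = 0 := by omega
      subst this
      rw [part_zero_row hD] at hpa
      omega
    have : a ∈ F.image nrow :=
      Finset.mem_image.2 ⟨(a, 1, c), Finset.mem_filter.2 ⟨hm, rfl⟩, rfl⟩
    exact (F.image nrow).le_max' a this
  have hγmem : 1 ≤ ncol γ ∧ ncol γ ≤ part D c ℓ := by
    have hm : γ = (ℓ, ncol γ, c) := by
      obtain ⟨x, y, z⟩ := γ
      simp only [nrow, ncol, ncomp] at hγr hγc ⊢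
      rw [hγr, hγc]
    have := (mem_diagram_iff hD).1 (hm ▸ hγD)
    exact ⟨this.2.1, this.2.2⟩
  refine ⟨ℓ, (hD.1 γ hγD).1.trans_eq hγr, by omega, ?_, hkey⟩
  by_contra h
  have h1 : 1 ≤ part D c (ℓ + 1) := by omega
  have := hkey _ h1
  omega

lemma row_le_card {D : Finset Node} (hD : IsDiagram D) {c : Fin 2} {a : ℕ}
    (ha : 1 ≤ a) (hp : 1 ≤ part D c a) : a ≤ D.card := by
  classical
  have hmem : ∀ j ∈ Finset.Icc 1 a, (j, 1, c) ∈ D := by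
    intro j hj
    rcases Finset.mem_Icc.1 hj with ⟨hj1, hj2⟩
    apply (mem_diagram_iff hD).2
    refine ⟨hj1, le_refl 1, ?_⟩
    have := part_le_of_le hD c hj1 hj2
    omega
  have hinj : Set.InjOn (fun j => ((j, 1, c) : Node)) (Finset.Icc 1 a) := by
    intro x _ y _ hxy
    exact congrArg (fun δ : Node => nrow δ) hxy
  have := Finset.card_le_card_of_injOn (fun j => ((j, 1, c) : Node)) hmem hinj
  simpa using this

lemma part_zero_of_no_comp {D : Finset Node} {c : Fin 2}
    (h : ∀ γ ∈ D, ncomp γ ≠ c) (a : ℕ) : part D c a = 0 := by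
  rw [part, Finset.card_eq_zero, Finset.filter_eq_empty_iff]
  rintro γ hγ ⟨-, h2⟩
  exact h γ hγ h2

lemma exists_good_removal {s : Fin 2 → ℤ} {d : ℕ} (hd : (d : ℤ) = s 1 - s 0)
    {D : Finset Node} (hD : IsDiagram D) (hne : D.Nonempty)
    (hdom : ∀ i : ℕ, 1 ≤ i → part D 1 (i + d) ≤ part D 0 i) :
    ∃ γ : Node, GoodNode D (chargeLT s) (cont s) (cont s γ) γ ∧ γ ∈ D ∧
      IsDiagram (D.erase γ) ∧
      ∀ i : ℕ, 1 ≤ i → part (D.erase γ) 1 (i + d) ≤ part (D.erase γ) 0 i := by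
  classical
  by_cases hc1 : ∃ γ ∈ D, ncomp γ = 1
  · by_cases hub : ∃ ρ : Node, Removable D ρ ∧ ncomp ρ = 1 ∧
        ∀ x : Node, Addable D x → ncomp x = 0 → cont s x ≠ cont s ρ
    · -- unblocked component-1 removable node
      obtain ⟨ρ, hρrem, hρc, hρna⟩ := hub
      refine ⟨ρ, good_comp1 hD hρrem hρc hρna, hρrem.1, hρrem.2, ?_⟩
      intro j hj
      have hpe := part_erase hρrem.1
      have e0 : part (D.erase ρ) 0 j = part D 0 j := by
        rw [hpe]
        rw [if_neg]
        rintro ⟨-, h2⟩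
        rw [hρc] at h2
        exact absurd h2 (by decide)
      have e1 : part (D.erase ρ) 1 (j + d) ≤ part D 1 (j + d) := by
        rw [hpe]; split <;> omega
      have := hdom j hj
      omega
    · -- all component-1 removables are blocked
      push_neg at hub
      obtain ⟨ℓ, hℓ1, hℓp, hℓ0, hℓmax⟩ := exists_last_row hD hc1
      have hρrem : Removable D (ℓ, part D 1 ℓ, 1) := by
        apply (removable_iff hD).2
        exact ⟨hℓ1, hℓp, rfl, by omega⟩
      obtain ⟨x, hxadd, hx0, hxcont⟩ := hub _ hρrem rfl
      obtain ⟨i₀, b, cx⟩ := x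
      simp only [ncomp] at hx0
      subst hx0
      obtain ⟨hi₀, hbeq, -⟩ := (addable_iff hD).1 hxadd
      set v := part D 0 i₀ with hv
      have hstar : (v : ℤ) - i₀ = (part D 1 ℓ : ℤ) - ℓ + d - 1 := by
        rw [cont_mk, cont_mk] at hxcont
        omega
      have hv1 : 1 ≤ v := by
        by_contra h0
        have hv0 : v = 0 := by omega
        have hile : i₀ + d ≤ ℓ := by omega
        have h1 := part_le_of_le hD 1 (a := i₀ + d) (by omega) hile
        have h2 := hdom i₀ hi₀
        omega
      -- i' : the last row of component 0 with part equal to v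
      set S := (Finset.Icc i₀ (i₀ + D.card)).filter (fun a => part D 0 a = v) with hS
      have hSne : S.Nonempty := ⟨i₀, Finset.mem_filter.2 ⟨Finset.mem_Icc.2 ⟨le_refl _, by omega⟩, rfl⟩⟩
      set i' := S.max' hSne with hi'
      have hi'mem := Finset.mem_filter.1 (S.max'_mem hSne)
      have hi'lo : i₀ ≤ i' := (Finset.mem_Icc.1 hi'mem.1).1
      have hi'v : part D 0 i' = v := hi'mem.2
      have hstep' : part D 0 (i' + 1) < v := by
        have hle : part D 0 (i' + 1) ≤ part D 0 i' := part_antitone hD 0 (by omega)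
        rcases lt_or_eq_of_le hle with h | h
        · omega
        · exfalso
          have hp1 : 1 ≤ part D 0 (i' + 1) := by omega
          have hcard := row_le_card hD (by omega) hp1
          have : i' + 1 ∈ S := by
            apply Finset.mem_filter.2
            refine ⟨Finset.mem_Icc.2 ⟨by omega, by omega⟩, by omega⟩
          have := S.le_max' _ this
          omega
      have hγrem : Removable D (i', v, 0) := by
        apply (removable_iff hD).2
        exact ⟨by omega, hv1, hi'v.symm, by omega⟩
      refine ⟨(i', v, 0), ?_, hγrem.1, hγrem.2, ?_⟩
      · refine good_comp0 hD hγrem rfl ?_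
        intro x hxrem hx1 hxc
        obtain ⟨y, hyadd, hy0, hycont⟩ := hub x hxrem hx1
        exact not_addable_removable hD hyadd hγrem (by rw [hy0]; rfl)
          (hycont.trans hxc)
      · -- dominance is preserved
        intro j hj
        have hpe := part_erase hγrem.1
        have e1 : part (D.erase (i', v, 0)) 1 (j + d) = part D 1 (j + d) := by
          rw [hpe]
          rw [if_neg]
          rintro ⟨-, h2⟩
          simp [ncomp] at h2
        rw [e1, hpe]
        show part D 1 (j + d) ≤ if i' = j ∧ (0 : Fin 2) = 0 then part D 0 j - 1 else part D 0 j
        by_cases hji : i' = j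
        · rw [if_pos ⟨hji, rfl⟩]
          subst hji
          -- need strict inequality part D 1 (i'+d) < v
          have hd1 := hdom i' (by omega)
          rcases lt_or_eq_of_le (hd1.trans_eq hi'v) with h | h
          · omega
          · exfalso
            -- part D 1 (i'+d) = v
            have hil : i' + d ≤ ℓ := hℓmax _ (by omega)
            have h2 : part D 1 (i₀ + d) ≤ v := hdom i₀ hi₀
            have h3 : part D 1 (i' + d) ≤ part D 1 (i₀ + d) :=
              part_le_of_le hD 1 (by omega) (by omega)
            have h4 : part D 1 ℓ ≤ part D 1 (i₀ + d) :=
              part_le_of_le hD 1 (by omega) (by omega)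
            omega
        · rw [if_neg (by rintro ⟨h, -⟩; exact hji h)]
          exact hdom j hj
  · -- no component-1 nodes at all
    push_neg at hc1
    have hc0 : ∃ γ ∈ D, ncomp γ = 0 := by
      obtain ⟨γ, hγ⟩ := hne
      rcases fin2_cases (ncomp γ) with h | h
      · exact ⟨γ, hγ, h⟩
      · exact absurd h (hc1 γ hγ)
    obtain ⟨ℓ, hℓ1, hℓp, hℓ0, -⟩ := exists_last_row hD hc0
    have hγrem : Removable D (ℓ, part D 0 ℓ, 0) := by
      apply (removable_iff hD).2
      exact ⟨hℓ1, hℓp, rfl, by omega⟩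
    refine ⟨(ℓ, part D 0 ℓ, 0), ?_, hγrem.1, hγrem.2, ?_⟩
    · refine good_comp0 hD hγrem rfl ?_
      intro x hxrem hx1 _
      exact hc1 x hxrem.1 hx1
    · intro j hj
      have hz : part (D.erase (ℓ, part D 0 ℓ, 0)) 1 (j + d) = 0 := by
        apply part_zero_of_no_comp
        intro γ hγ
        exact hc1 γ (Finset.mem_of_mem_erase hγ)
      omega


lemma backward_dir {s : Fin 2 → ℤ} {d : ℕ} (hd : (d : ℤ) = s 1 - s 0) :
    ∀ (n : ℕ) (D : Finset Node), IsDiagram D → D.card = n →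
      (∀ i : ℕ, 1 ≤ i → part D 1 (i + d) ≤ part D 0 i) →
      CrystalSet (chargeLT s) (cont s) n D := by
  intro n
  induction n with
  | zero =>
    intro D _ hcard _
    rw [Finset.card_eq_zero] at hcard
    subst hcard
    exact CrystalSet.empty
  | succ m ih =>
    intro D hD hcard hdom
    have hne : D.Nonempty := Finset.card_pos.1 (by omega)
    obtain ⟨γ, hgood, hγD, hEdiag, hEdom⟩ := exists_good_removal hd hD hne hdom
    have hEcard : (D.erase γ).card = m := by
      rw [Finset.card_erase_of_mem hγD]
      omega
    exact CrystalSet.step (cont s γ) hD hgood (ih _ hEdiag hEcard hEdom)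


/-- the set `Φ_{∞,n}^{(s₀,s₁)}` (crystal for `sl_∞`, integer residues) is
exactly the set of bipartitions of rank `n` with `λ⁽⁰⁾_i ≥ λ⁽¹⁾_{i+s₁-s₀}` for all
`i ≥ 1`. -/
theorem phi_infinity_characterization (s₀ s₁ : ℤ) (hs : s₀ ≤ s₁) (n : ℕ)
    (D : Finset Node) :
    CrystalSet (chargeLT ![s₀, s₁]) (cont ![s₀, s₁]) n D ↔
      (IsDiagram D ∧ D.card = n ∧
        ∀ i : ℕ, 1 ≤ i → part D 1 (i + (s₁ - s₀).toNat) ≤ part D 0 i) := by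
  have hd : (((s₁ - s₀).toNat : ℕ) : ℤ) = (![s₀, s₁]) 1 - (![s₀, s₁]) 0 := by
    show (((s₁ - s₀).toNat : ℕ) : ℤ) = s₁ - s₀
    exact Int.toNat_of_nonneg (by omega)
  constructor
  · exact forward_dir hd
  · rintro ⟨h1, h2, h3⟩
    exact backward_dir hd n D h1 h2 h3


end UglovPaper
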